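/- Let J be the N×N Jordan block with eigenvalue λ. Then for every ε > 0, the open ball B(λ, (ε(1+ε)^{N−1})^{1/N}) is contained in σ_ε(J). -/

import Mathlib

open Matrix

/-- The operator norm of a matrix, induced by the Euclidean norm. -/
noncomputable def opNorm {n : Type*} [Fintype n] [DecidableEq n]
    (A : Matrix n n ℂ) : ℝ :=
  ‖Matrix.toEuclideanCLM (𝕜 := ℂ) A‖

/-- The N×N Jordan block with eigenvalue `lam`. -/
def jordanBlock (N : ℕ) (lam : ℂ) : Matrix (Fin N) (Fin N) ℂ :=
  Matrix.of fun i j => if (j : ℕ) = i then lam else if (j : ℕ) = (i : ℕ) + 1 then 1 else 0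

theorem ball_subset_pseudospectrum_jordanBlock
    (N : ℕ) (hN : 0 < N) (lam : ℂ) (ε : ℝ) (hε : 0 < ε) (z : ℂ)
    (hz : dist z lam < (ε * (1 + ε) ^ (N - 1)) ^ ((1 : ℝ) / N)) :
    ∃ E : Matrix (Fin N) (Fin N) ℂ, opNorm E < ε ∧
      z ∈ spectrum ℂ (jordanBlock N lam + E) := by
  obtain ⟨M, rfl⟩ : ∃ M, N = M + 1 := ⟨N - 1, by omega⟩
  simp only [Nat.add_sub_cancel] at hz ⊢
  set r : ℝ := dist z lam with hrdef
  have hr0 : 0 ≤ r := dist_nonneg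
  have hX : 0 < ε * (1 + ε) ^ M := by positivity
  -- raise hz to the N-th power
  have hrN : r ^ (M + 1) < ε * (1 + ε) ^ M := by
    have h2 : r ^ ((M + 1 : ℕ) : ℝ)
        < ((ε * (1 + ε) ^ M) ^ ((1 : ℝ) / (M + 1 : ℕ))) ^ ((M + 1 : ℕ) : ℝ) :=
      Real.rpow_lt_rpow hr0 hz (by positivity)
    rw [← Real.rpow_mul hX.le, one_div, inv_mul_cancel₀ (by positivity : ((M + 1 : ℕ) : ℝ) ≠ 0),
      Real.rpow_one, Real.rpow_natCast] at h2
    exact h2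
  -- choose δ
  obtain ⟨δ, hδ0, hδε, hδ⟩ : ∃ δ : ℝ, 0 ≤ δ ∧ δ < ε ∧ r ^ (M + 1) < ε * (1 + δ) ^ M := by
    have hopen : IsOpen {t : ℝ | r ^ (M + 1) < ε * (1 + t) ^ M} :=
      isOpen_lt continuous_const (by continuity)
    obtain ⟨η, hη, hball⟩ := Metric.mem_nhds_iff.mp (hopen.mem_nhds hrN)
    have h1 : 0 < min (η / 2) (ε / 2) := lt_min (by linarith) (by linarith)
    have h2 := min_le_left (η / 2) (ε / 2)
    have h3 := min_le_right (η / 2) (ε / 2)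
    refine ⟨ε - min (η / 2) (ε / 2), by linarith, by linarith, ?_⟩
    apply hball
    simp only [Metric.mem_ball, Real.dist_eq]
    rw [abs_of_nonpos (by linarith)]
    linarith
  have h1δ : (0 : ℝ) < 1 + δ := by linarith
  have h1δC : ((1 + δ : ℝ) : ℂ) ≠ 0 := by exact_mod_cast h1δ.ne'
  set w : ℂ := z - lam with hwdef
  have habsw : ‖w‖ = r := by rw [hrdef, Complex.dist_eq]
  set c : ℂ := w ^ (M + 1) / ((1 + δ : ℝ) : ℂ) ^ M with hcdef
  have habsc : ‖c‖ < ε := by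
    rw [hcdef, norm_div, norm_pow, norm_pow, habsw, Complex.norm_real, Real.norm_eq_abs, abs_of_pos h1δ,
      div_lt_iff₀ (by positivity)]
    linarith [hδ]
  set d : Fin (M + 1) → ℂ := fun i => if (i : ℕ) + 1 = M + 1 then c else ((δ : ℝ) : ℂ) with hddef
  set E : Matrix (Fin (M + 1)) (Fin (M + 1)) ℂ :=
    Matrix.of (fun i j => if j = finRotate (M + 1) i then d i else 0) with hEdef
  have hEmul : ∀ f : Fin (M + 1) → ℂ, ∀ i, E.mulVec f i = d i * f (finRotate (M + 1) i) := by
    intro f i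
    simp only [hEdef, mulVec, dotProduct, Matrix.of_apply, ite_mul, zero_mul]
    rw [Finset.sum_ite_eq' Finset.univ (finRotate (M + 1) i) (fun j => d i * f j)]
    simp
  refine ⟨E, ?_, ?_⟩
  · -- norm bound
    set m : ℝ := max δ ‖c‖ with hmdef
    have hm0 : 0 ≤ m := le_trans hδ0 (le_max_left _ _)
    have hle : opNorm E ≤ m := by
      apply ContinuousLinearMap.opNorm_le_bound _ hm0
      intro x
      have hx : ∀ i, (Matrix.toEuclideanCLM (𝕜 := ℂ) E x) i
          = d i * x (finRotate (M + 1) i) := by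
        intro i
        have h3 := congrFun (Matrix.ofLp_toEuclideanCLM (𝕜 := ℂ) E x) i
        exact h3.trans (hEmul _ i)
      rw [EuclideanSpace.norm_eq, EuclideanSpace.norm_eq]
      have hsum : ∑ i, ‖(Matrix.toEuclideanCLM (𝕜 := ℂ) E x) i‖ ^ 2
          ≤ m ^ 2 * ∑ i, ‖x i‖ ^ 2 := by
        rw [Finset.mul_sum, ← Equiv.sum_comp (finRotate (M + 1)) (fun i => m ^ 2 * ‖x i‖ ^ 2)]
        apply Finset.sum_le_sum
        intro i _
        rw [hx i, norm_mul, mul_pow]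
        apply mul_le_mul_of_nonneg_right _ (by positivity)
        have hdle : ‖d i‖ ≤ m := by
          simp only [hddef]
          split_ifs
          · exact le_max_right _ _
          · rw [Complex.norm_real, Real.norm_eq_abs, abs_of_nonneg hδ0]
            exact le_max_left _ _
        have h0 := norm_nonneg (d i)
        nlinarith
      calc Real.sqrt (∑ i, ‖(Matrix.toEuclideanCLM (𝕜 := ℂ) E x) i‖ ^ 2)
          ≤ Real.sqrt (m ^ 2 * ∑ i, ‖x i‖ ^ 2) := Real.sqrt_le_sqrt hsum
        _ = m * Real.sqrt (∑ i, ‖x i‖ ^ 2) := by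
            rw [Real.sqrt_mul (by positivity), Real.sqrt_sq hm0]
    exact lt_of_le_of_lt hle (max_lt hδε habsc)
  · -- spectrum
    set u : ℂ := w / ((1 + δ : ℝ) : ℂ) with hudef
    set v : Fin (M + 1) → ℂ := fun i => u ^ (i : ℕ) with hvdef
    have hv0 : v ⟨0, Nat.succ_pos M⟩ = 1 := by simp [hvdef]
    have heig : (jordanBlock (M + 1) lam + E).mulVec v = z • v := by
      funext i
      rw [add_mulVec, Pi.add_apply, hEmul]
      by_cases hlt : (i : ℕ) + 1 < M + 1
      · -- non-last rows
        have hiM : (i : ℕ) < M := by omega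
        set i' : Fin (M + 1) := ⟨(i : ℕ) + 1, hlt⟩ with hi'def
        have hrot : finRotate (M + 1) i = i' := by
          have := finRotate_of_lt (n := M) hiM
          simpa [Fin.eta] using this
        have hJ : (jordanBlock (M + 1) lam).mulVec v i = lam * v i + v i' := by
          simp only [jordanBlock, mulVec, dotProduct, Matrix.of_apply]
          have hsplit : ∀ j : Fin (M + 1),
              (if (j : ℕ) = (i : ℕ) then lam else if (j : ℕ) = (i : ℕ) + 1 then 1 else 0) * v j
              = (if j = i then lam * v j else 0) + (if j = i' then v j else 0) := by
            intro j
            by_cases hji : j = i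
            · rw [hji]
              have hii' : i ≠ i' := by simp only [hi'def, ne_eq, Fin.ext_iff]; omega
              simp [hii']
            · rcases eq_or_ne j i' with rfl | hji'
              · have hne : ((i' : ℕ)) ≠ (i : ℕ) := by simp only [hi'def]; omega
                rw [if_neg hne, if_pos (by simp [hi'def]), if_neg hji, if_pos rfl, zero_add, one_mul]
              · have h1 : (j : ℕ) ≠ (i : ℕ) := fun h => hji (Fin.ext h)
                have h2 : (j : ℕ) ≠ (i : ℕ) + 1 := fun h => hji' (Fin.ext h)
                simp [h1, h2, hji, hji']
          rw [Finset.sum_congr rfl fun j _ => hsplit j, Finset.sum_add_distrib,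
            Finset.sum_ite_eq' Finset.univ i (fun j => lam * v j),
            Finset.sum_ite_eq' Finset.univ i' v]
          simp
        have hd : d i = ((δ : ℝ) : ℂ) := by simp only [hddef]; rw [if_neg (by omega)]
        rw [hJ, hrot, hd]
        have hvv : v i' = u * v i := by
          simp only [hvdef, hi'def]
          rw [pow_succ, mul_comm]
        have hu : ((1 + δ : ℝ) : ℂ) * u = w := by
          rw [hudef, mul_div_cancel₀ _ h1δC]
        rw [hvv]
        push_cast
        have : lam * v i + u * v i + δ * (u * v i) = (lam + (1 + δ) * u) * v i := by ring
        rw [this]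
        have : ((1 : ℂ) + δ) * u = w := by push_cast at hu ⊢; exact hu
        rw [this, hwdef, Pi.smul_apply, smul_eq_mul]
        ring
      · -- last row
        have hiM : (i : ℕ) = M := by omega
        have hlast : i = Fin.last M := Fin.ext (by simpa using hiM)
        have hrot : finRotate (M + 1) i = ⟨0, Nat.succ_pos M⟩ := by
          rw [hlast, finRotate_last]; rfl
        have hJ : (jordanBlock (M + 1) lam).mulVec v i = lam * v i := by
          simp only [jordanBlock, mulVec, dotProduct, Matrix.of_apply]
          have hsplit : ∀ j : Fin (M + 1),
              (if (j : ℕ) = (i : ℕ) then lam else if (j : ℕ) = (i : ℕ) + 1 then 1 else 0) * v j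
              = if j = i then lam * v j else 0 := by
            intro j
            rcases eq_or_ne j i with rfl | hji
            · simp
            · have h1 : (j : ℕ) ≠ (i : ℕ) := fun h => hji (Fin.ext h)
              have h2 : (j : ℕ) ≠ (i : ℕ) + 1 := by omega
              simp [h1, h2, hji]
          rw [Finset.sum_congr rfl fun j _ => hsplit j,
            Finset.sum_ite_eq' Finset.univ i (fun j => lam * v j)]
          simp
        have hd : d i = c := by simp only [hddef]; rw [if_pos (by omega)]
        rw [hJ, hrot, hd, hv0, mul_one]
        have hc : c = w * v i := by
          simp only [hvdef, hiM, hcdef, hudef, div_pow]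
          rw [pow_succ]
          ring
        rw [hc, Pi.smul_apply, smul_eq_mul, hwdef]
        ring
    rw [spectrum.mem_iff]
    intro hunit
    obtain ⟨B, hB⟩ := hunit.exists_left_inv
    have h0 : (algebraMap ℂ (Matrix (Fin (M + 1)) (Fin (M + 1)) ℂ) z
        - (jordanBlock (M + 1) lam + E)).mulVec v = 0 := by
      rw [sub_mulVec, Algebra.algebraMap_eq_smul_one, smul_mulVec, one_mulVec, heig]
      simp
    have hv : v = 0 := by
      have h1 := congrArg (fun A => A.mulVec v) hB
      simp only [← mulVec_mulVec, h0, one_mulVec] at h1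
      simpa [mulVec_zero] using h1.symm
    rw [hv] at hv0
    simp at hv0
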